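/- Let y_1, …, y_m be nonzero complex numbers with y_k^n = (−1)^{m+1} for all k. Let i = (i_1,…,i_m) with 1 ≤ i_1 < ⋯ < i_m ≤ n, let d ≥ 0, and let α = (i;d). Then det[(y_k^{\,n−α_j})_{1≤k,j≤m}] = det[(y_k^{\,n−i_j})_{1≤k,j≤m}], where powers with negative integer exponents are interpreted via inverses (y^{−s} = (y^{−1})^s). In other words, with D(β) := det[(y_k^{\,n−β_j})], one has D(α) = D(i), including the signs. -/

import Mathlib

/-- The index `(i;d)` : writing `d = k*m + r` with `0 ≤ r < m`,
`(i;d)_l = k*n + i_{l+r}` for `l ≤ m - r` and `(i;d)_l = (k+1)*n + i_{l-m+r}`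
for `l > m - r` (zero-based indexing here). -/
def semi (n : ℕ) {m : ℕ} (i : Fin m → ℤ) (d : ℕ) : Fin m → ℤ := fun l =>
  if h : (l : ℕ) + d % m < m then
    (d / m : ℤ) * n + i ⟨(l : ℕ) + d % m, h⟩
  else
    ((d / m : ℤ) + 1) * n +
      i ⟨(l : ℕ) + d % m - m, by
        have hl := l.2
        have hmod : d % m < m := Nat.mod_lt d (by omega)
        omega⟩

lemma i_congr {m : ℕ} (i : Fin m → ℤ) {a b : ℕ} {pa : a < m} {pb : b < m} (h : a = b) :
    i ⟨a, pa⟩ = i ⟨b, pb⟩ := by subst h; rfl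

lemma semi_succ (n : ℕ) {m : ℕ} (hm : 0 < m) (i : Fin m → ℤ) (d : ℕ) (j : Fin m) :
    semi n i (d + 1) j =
      if h : (j : ℕ) + 1 < m then semi n i d ⟨(j : ℕ) + 1, h⟩
      else semi n i d ⟨0, hm⟩ + n := by
  obtain ⟨q, r, hr, rfl⟩ : ∃ q r, r < m ∧ d = r + q * m :=
    ⟨d / m, d % m, Nat.mod_lt _ hm, by
      have h := Nat.div_add_mod d m
      rw [Nat.mul_comm] at h
      omega⟩
  have hmod : (r + q * m) % m = r := by
    rw [Nat.add_mul_mod_self_right, Nat.mod_eq_of_lt hr]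
  have hdiv : (r + q * m) / m = q := by
    rw [Nat.add_mul_div_right _ _ hm, Nat.div_eq_of_lt hr, Nat.zero_add]
  have hdivZ : ((r + q * m : ℕ) : ℤ) / (m : ℤ) = (q : ℤ) := by
    rw [← Int.natCast_div, hdiv]
  by_cases hr1 : r + 1 < m
  · have hmod1 : (r + q * m + 1) % m = r + 1 := by
      have h : r + q * m + 1 = (r + 1) + q * m := by ring
      rw [h, Nat.add_mul_mod_self_right, Nat.mod_eq_of_lt hr1]
    have hdiv1 : (r + q * m + 1) / m = q := by
      have h : r + q * m + 1 = (r + 1) + q * m := by ring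
      rw [h, Nat.add_mul_div_right _ _ hm, Nat.div_eq_of_lt hr1, Nat.zero_add]
    have hdivZ1 : ((r + q * m + 1 : ℕ) : ℤ) / (m : ℤ) = (q : ℤ) := by
      rw [← Int.natCast_div, hdiv1]
    simp only [semi, hmod, hmod1, hdivZ, hdivZ1]
    by_cases hj : (j : ℕ) + 1 < m
    · rw [dif_pos hj]
      by_cases h2 : (j : ℕ) + (r + 1) < m
      · rw [dif_pos h2, dif_pos (show (j : ℕ) + 1 + r < m by omega),
          i_congr i (show (j : ℕ) + (r + 1) = (j : ℕ) + 1 + r by omega)]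
      · rw [dif_neg h2, dif_neg (show ¬ ((j : ℕ) + 1 + r < m) by omega),
          i_congr i (show (j : ℕ) + (r + 1) - m = (j : ℕ) + 1 + r - m by omega)]
    · rw [dif_neg hj]
      have hjm : (j : ℕ) = m - 1 := by have := j.2; omega
      rw [dif_neg (show ¬ ((j : ℕ) + (r + 1) < m) by omega), dif_pos (show 0 + r < m by omega),
        i_congr i (pb := by omega) (show (j : ℕ) + (r + 1) - m = 0 + r by omega)]
      ring
  · have hmod1 : (r + q * m + 1) % m = 0 := by
      have h : r + q * m + 1 = (q + 1) * m := by rw [Nat.add_mul]; omega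
      rw [h, Nat.mul_mod_left]
    have hdiv1 : (r + q * m + 1) / m = q + 1 := by
      have h : r + q * m + 1 = (q + 1) * m := by rw [Nat.add_mul]; omega
      rw [h, Nat.mul_div_cancel _ hm]
    have hdivZ1 : ((r + q * m + 1 : ℕ) : ℤ) / (m : ℤ) = (q : ℤ) + 1 := by
      rw [← Int.natCast_div, hdiv1]
      push_cast
      ring
    simp only [semi, hmod, hmod1, hdivZ, hdivZ1]
    by_cases hj : (j : ℕ) + 1 < m
    · rw [dif_pos hj, dif_pos (show (j : ℕ) + 0 < m by omega),
        dif_neg (show ¬ ((j : ℕ) + 1 + r < m) by omega),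
        i_congr i (show (j : ℕ) + 0 = (j : ℕ) + 1 + r - m by omega)]
    · rw [dif_neg hj, dif_pos (show (j : ℕ) + 0 < m by omega),
        dif_pos (show 0 + r < m by omega)]
      have hjm : (j : ℕ) = m - 1 := by have := j.2; omega
      rw [i_congr i (pb := by omega) (show (j : ℕ) + 0 = 0 + r by omega)]
      ring

/-- Key step: a cyclic column rotation with the wrapped column's exponent index
increased by `n` preserves the determinant. -/
lemma key_step {m : ℕ} (n : ℕ) (y : Fin (m + 1) → ℂ) (hy0 : ∀ k, y k ≠ 0)
    (hys : ∀ k, y k ^ (-(n : ℤ)) = (-1 : ℂ) ^ m)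
    (α β : Fin (m + 1) → ℤ)
    (hβ : ∀ j : Fin (m + 1), β j =
      if h : (j : ℕ) + 1 < m + 1 then α ⟨(j : ℕ) + 1, h⟩
      else α ⟨0, Nat.succ_pos m⟩ + n) :
    Matrix.det (Matrix.of fun k j : Fin (m + 1) => y k ^ ((n : ℤ) - β j)) =
      Matrix.det (Matrix.of fun k j : Fin (m + 1) => y k ^ ((n : ℤ) - α j)) := by
  set M : Matrix (Fin (m + 1)) (Fin (m + 1)) ℂ :=
    Matrix.of fun k j : Fin (m + 1) => y k ^ ((n : ℤ) - α j) with hM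
  set c : Fin (m + 1) → ℂ := fun j => if (j : ℕ) + 1 < m + 1 then 1 else (-1 : ℂ) ^ m with hc
  have hmat : (Matrix.of fun k j : Fin (m + 1) => y k ^ ((n : ℤ) - β j)) =
      Matrix.of fun k j => c j * (M.submatrix id (finRotate (m + 1))) k j := by
    ext k j
    simp only [Matrix.of_apply, Matrix.submatrix_apply, id_eq, hc, hM, hβ j,
      finRotate_succ_apply]
    by_cases hj : (j : ℕ) + 1 < m + 1
    · have hval : ((j + 1 : Fin (m + 1)) : ℕ) = (j : ℕ) + 1 :=
        Fin.val_add_one_of_lt (by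
          rw [Fin.lt_iff_val_lt_val, Fin.val_last]; omega)
      have hfin : (⟨(j : ℕ) + 1, hj⟩ : Fin (m + 1)) = j + 1 := Fin.ext hval.symm
      rw [dif_pos hj, if_pos hj, one_mul, hfin]
    · have hjl : j = Fin.last m := by
        ext; have := j.2; simp only [Fin.val_last]; omega
      rw [dif_neg hj, if_neg hj, hjl, Fin.last_add_one]
      have h0 : (0 : Fin (m + 1)) = ⟨0, Nat.succ_pos m⟩ := rfl
      rw [← h0]
      rw [show (n : ℤ) - (α 0 + n) = (-(n : ℤ)) + ((n : ℤ) - α 0) by ring,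
        zpow_add₀ (hy0 k), hys k]
  rw [hmat]
  rw [Matrix.det_mul_row c, Matrix.det_permute']
  have hprod : (∏ j, c j) = (-1 : ℂ) ^ m := by
    rw [hc]
    rw [Finset.prod_eq_single (Fin.last m)]
    · simp [Fin.val_last]
    · intro b _ hb
      have : (b : ℕ) + 1 < m + 1 := by
        have := b.2
        rcases Nat.lt_or_ge ((b : ℕ) + 1) (m + 1) with h | h
        · exact h
        · exact absurd (Fin.ext (by omega : (b : ℕ) = m)) hb
      simp [this]
    · simp
  have hsign : ((Equiv.Perm.sign (finRotate (m + 1)) : ℤ) : ℂ) = (-1 : ℂ) ^ m := by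
    rw [sign_finRotate]
    push_cast
    ring
  rw [hprod, hsign, ← mul_assoc, ← pow_add, show m + m = 2 * m by ring, pow_mul]
  norm_num

/-- With `y_k^n = (-1)^{m+1}`, the alternant `D(β) = det[y_k^{n - β_j}]`
(negative powers interpreted via inverses) satisfies `D((i;d)) = D(i)`,
including the sign. -/
theorem stmt11 (m p : ℕ) (hm : 1 ≤ m) (hp : 1 ≤ p) (n : ℕ) (hn : n = m + p)
    (y : Fin m → ℂ) (hy0 : ∀ k, y k ≠ 0)
    (hy : ∀ k, y k ^ n = (-1 : ℂ) ^ (m + 1))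
    (i : Fin m → ℤ) (hi1 : ∀ l, 1 ≤ i l) (hi2 : StrictMono i)
    (hi3 : ∀ l, i l ≤ n) (d : ℕ) :
    Matrix.det (Matrix.of fun k j : Fin m => y k ^ ((n : ℤ) - semi n i d j)) =
      Matrix.det (Matrix.of fun k j : Fin m => y k ^ ((n : ℤ) - i j)) := by
  obtain ⟨m', rfl⟩ : ∃ m', m = m' + 1 := ⟨m - 1, by omega⟩
  have hys : ∀ k, y k ^ (-(n : ℤ)) = (-1 : ℂ) ^ m' := by
    intro k
    rw [zpow_neg, zpow_natCast, hy k]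
    rw [show ((-1 : ℂ) ^ (m' + 1 + 1)) = (-1 : ℂ) ^ m' by
      rw [pow_succ, pow_succ]; ring]
    rw [← inv_pow]
    norm_num
  induction d with
  | zero =>
    congr 1
    ext k j
    simp [semi, j.2, Fin.is_le]
  | succ d ih =>
    rw [key_step n y hy0 hys (semi n i d) (semi n i (d + 1))
      (fun j => semi_succ n (Nat.succ_pos m') i d j), ih]
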